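/- For n ≥ 4 and any graph G, the neighbourhood corona K_n ⋆ G is Class 0: its pebbling number equals its number of vertices, n + n|V(G)|. -/

import Mathlib

open SimpleGraph

variable {V : Type*}

/-- A single pebbling move: remove two pebbles from `u`, add one to a neighbor `v`. -/
def PebblingMove (G : SimpleGraph V) (c c' : V → ℕ) : Prop :=
  ∃ u v, G.Adj u v ∧ 2 ≤ c u ∧
    c' u = c u - 2 ∧ c' v = c v + 1 ∧ ∀ w, w ≠ u → w ≠ v → c' w = c w

/-- `c'` is reachable from `c` by a sequence of pebbling moves. -/
def PebblingReach (G : SimpleGraph V) (c c' : V → ℕ) : Prop :=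
  Relation.ReflTransGen (PebblingMove G) c c'

/-- A configuration is `t`-fold `r`-solvable if some sequence of pebbling moves
places at least `t` pebbles on `r`. -/
def PebblingSolvable (G : SimpleGraph V) (c : V → ℕ) (r : V) (t : ℕ) : Prop :=
  ∃ c', PebblingReach G c c' ∧ t ≤ c' r

variable [Fintype V]

/-- The set of sizes `m` such that every configuration of size `m` is
`t`-fold `r`-solvable for every target `r`. -/
def pebblingSet (G : SimpleGraph V) (t : ℕ) : Set ℕ :=
  {m | ∀ c : V → ℕ, (∑ v, c v) = m → ∀ r : V, PebblingSolvable G c r t}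

/-- The `t`-fold pebbling number, as an extended natural number
(`⊤` when no bound exists, e.g. for disconnected graphs). -/
noncomputable def pebblingNumber (G : SimpleGraph V) (t : ℕ) : ℕ∞ :=
  sInf ((↑) '' pebblingSet G t)

/-- A configuration is cover-solvable if pebbling moves can reach a configuration
with at least one pebble on every vertex. -/
def IsCoverSolvable (G : SimpleGraph V) (c : V → ℕ) : Prop :=
  ∃ c', PebblingReach G c c' ∧ ∀ v : V, 1 ≤ c' v

/-- The cover pebbling number. -/
noncomputable def coverPebblingNumber (G : SimpleGraph V) : ℕ∞ :=
  sInf ((↑) '' {m : ℕ | ∀ c : V → ℕ, (∑ v, c v) = m → IsCoverSolvable G c})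

/-- The optimal pebbling number: the least size of a single configuration that is
`r`-solvable for every vertex `r`. -/
noncomputable def optimalPebblingNumber (G : SimpleGraph V) : ℕ∞ :=
  sInf ((↑) '' {m : ℕ | ∃ c : V → ℕ, (∑ v, c v) = m ∧ ∀ r : V, PebblingSolvable G c r 1})

/-- The neighbourhood corona `G ⋆ H`. -/
def ncoronaProd {α β : Type*} (G : SimpleGraph α) (H : SimpleGraph β) :
    SimpleGraph (α ⊕ α × β) :=
  SimpleGraph.fromRel (fun u v =>
    match u, v with
    | Sum.inl a, Sum.inl b => G.Adj a b
    | Sum.inl a, Sum.inr p => G.Adj a p.1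
    | Sum.inr p, Sum.inr q => p.1 = q.1 ∧ H.Adj p.2 q.2
    | _, _ => False)


section ClassZeroHelpers

open Classical in
/-- The configuration resulting from a pebbling move from `u` to `v`. -/
noncomputable def mvc {α : Type*} (c : α → ℕ) (u v : α) : α → ℕ :=
  fun w => if w = u then c u - 2 else if w = v then c v + 1 else c w

variable {α : Type*} {Γ : SimpleGraph α} {c : α → ℕ} {u v w r u1 u2 : α}

lemma mvc_src : mvc c u v u = c u - 2 := by simp [mvc]

lemma mvc_tgt (h : v ≠ u) : mvc c u v v = c v + 1 := by simp [mvc, h]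

lemma mvc_other (h1 : w ≠ u) (h2 : w ≠ v) : mvc c u v w = c w := by simp [mvc, h1, h2]

lemma move_mvc (h : Γ.Adj u v) (h2 : 2 ≤ c u) : PebblingMove Γ c (mvc c u v) :=
  ⟨u, v, h, h2, mvc_src, mvc_tgt h.ne', fun _ hw1 hw2 => mvc_other hw1 hw2⟩

lemma solvA (h : Γ.Adj u r) (h2 : 2 ≤ c u) : PebblingSolvable Γ c r 1 :=
  ⟨mvc c u r, Relation.ReflTransGen.single (move_mvc h h2), by rw [mvc_tgt h.ne']; omega⟩

lemma solvB (h1 : Γ.Adj u w) (h2 : Γ.Adj w r) (hur : u ≠ r) (hcu : 2 ≤ c u)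
    (hcw : 1 ≤ c w) : PebblingSolvable Γ c r 1 := by
  refine ⟨mvc (mvc c u w) w r, ?_, ?_⟩
  · refine Relation.ReflTransGen.head (move_mvc h1 hcu)
      (Relation.ReflTransGen.single (move_mvc h2 ?_))
    rw [mvc_tgt h1.ne']; omega
  · rw [mvc_tgt h2.ne', mvc_other (Ne.symm hur) h2.ne']; omega

lemma solvC (h1 : Γ.Adj u w) (h2 : Γ.Adj w r) (hur : u ≠ r) (hcu : 4 ≤ c u) :
    PebblingSolvable Γ c r 1 := by
  refine ⟨mvc (mvc (mvc c u w) u w) w r, ?_, ?_⟩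
  · refine Relation.ReflTransGen.head (move_mvc h1 (by omega))
      (Relation.ReflTransGen.head (move_mvc h1 ?_)
        (Relation.ReflTransGen.single (move_mvc h2 ?_)))
    · rw [mvc_src]; omega
    · rw [mvc_tgt h1.ne', mvc_tgt h1.ne']; omega
  · rw [mvc_tgt h2.ne', mvc_other (Ne.symm hur) h2.ne',
      mvc_other (Ne.symm hur) h2.ne']; omega

lemma solvD (h1 : Γ.Adj u1 w) (h2 : Γ.Adj u2 w) (h3 : Γ.Adj w r) (h12 : u1 ≠ u2)
    (hr1 : u1 ≠ r) (hr2 : u2 ≠ r) (hc1 : 2 ≤ c u1) (hc2 : 2 ≤ c u2) :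
    PebblingSolvable Γ c r 1 := by
  refine ⟨mvc (mvc (mvc c u1 w) u2 w) w r, ?_, ?_⟩
  · refine Relation.ReflTransGen.head (move_mvc h1 hc1)
      (Relation.ReflTransGen.head (move_mvc h2 ?_)
        (Relation.ReflTransGen.single (move_mvc h3 ?_)))
    · rw [mvc_other (Ne.symm h12) h2.ne]; exact hc2
    · rw [mvc_tgt h2.ne', mvc_tgt h1.ne']; omega
  · rw [mvc_tgt h3.ne', mvc_other (Ne.symm hr2) h3.ne',
      mvc_other (Ne.symm hr1) h3.ne']; omega

lemma frozen {c' : α → ℕ} (hc : ∀ x, c x ≤ 1) (h : PebblingReach Γ c c') : c' = c := by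
  rcases Relation.ReflTransGen.cases_head h with h' | ⟨d, ⟨x, y, _, h2, _⟩, _⟩
  · exact h'.symm
  · exact absurd h2 (by have := hc x; omega)

end ClassZeroHelpers

section NCorona

variable {n : ℕ} {β : Type*}

def idxv : Fin n ⊕ Fin n × β → Fin n := Sum.elim id Prod.fst

lemma adj_inl (G : SimpleGraph β) {a : Fin n} {v : Fin n ⊕ Fin n × β} (h : a ≠ idxv v) :
    (ncoronaProd (⊤ : SimpleGraph (Fin n)) G).Adj (Sum.inl a) v := by
  cases v with
  | inl b =>
    have hab : a ≠ b := h
    simp [ncoronaProd, SimpleGraph.fromRel_adj, hab]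
  | inr p =>
    have hap : a ≠ p.1 := h
    simp [ncoronaProd, SimpleGraph.fromRel_adj, hap]

lemma ne_of_idx {a : Fin n} {v : Fin n ⊕ Fin n × β} (h : a ≠ idxv v) : Sum.inl a ≠ v := by
  cases v with
  | inl b => simpa [idxv] using h
  | inr p => simp

lemma exists_avoid (hn : 4 ≤ n) (x y z : Fin n) : ∃ a : Fin n, a ≠ x ∧ a ≠ y ∧ a ≠ z := by
  by_contra hcon
  push_neg at hcon
  have hsub : (Finset.univ : Finset (Fin n)) ⊆ {x, y, z} := by
    intro a _
    simp only [Finset.mem_insert, Finset.mem_singleton]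
    by_contra hc
    push_neg at hc
    exact hc.2.2 (hcon a hc.1 hc.2.1)
  have h1 := Finset.card_le_card hsub
  have h2 : ({x, y, z} : Finset (Fin n)).card ≤ 3 := by
    refine le_trans (Finset.card_insert_le _ _) ?_
    have h3 := Finset.card_insert_le y ({z} : Finset (Fin n))
    simp only [Finset.card_singleton] at h3
    omega
  simp only [Finset.card_univ, Fintype.card_fin] at h1
  omega

lemma mem_upper [Fintype β] (n : ℕ) (hn : 4 ≤ n) (G : SimpleGraph β) :
    (n + n * Fintype.card β) ∈ pebblingSet (ncoronaProd (⊤ : SimpleGraph (Fin n)) G) 1 := by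
  classical
  set Γ := ncoronaProd (⊤ : SimpleGraph (Fin n)) G with hG
  set N := n + n * Fintype.card β with hNdef
  have hnN : n ≤ N := Nat.le_add_right _ _
  have hcard : Fintype.card (Fin n ⊕ Fin n × β) = N := by
    simp [hNdef]
  intro c hsum r
  by_cases hr1 : 1 ≤ c r
  · exact ⟨c, Relation.ReflTransGen.refl, hr1⟩
  have hr0 : c r = 0 := by omega
  by_cases hnb : ∃ u, Γ.Adj u r ∧ 2 ≤ c u
  · obtain ⟨u, hadj, hcu⟩ := hnb
    exact solvA hadj hcu
  by_cases h4 : ∃ u, 4 ≤ c u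
  · obtain ⟨u, hcu⟩ := h4
    obtain ⟨a, ha1, ha2, -⟩ := exists_avoid hn (idxv u) (idxv r) (idxv r)
    have hur : u ≠ r := by intro he; rw [he] at hcu; omega
    exact solvC (adj_inl G ha1).symm (adj_inl G ha2) hur hcu
  by_cases h2 : ∃ u1 u2, u1 ≠ u2 ∧ 2 ≤ c u1 ∧ 2 ≤ c u2
  · obtain ⟨u1, u2, h12, hc1, hc2⟩ := h2
    obtain ⟨a, ha1, ha2, ha3⟩ := exists_avoid hn (idxv u1) (idxv u2) (idxv r)
    have hr1' : u1 ≠ r := by intro he; rw [he] at hc1; omega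
    have hr2' : u2 ≠ r := by intro he; rw [he] at hc2; omega
    exact solvD (adj_inl G ha1).symm (adj_inl G ha2).symm (adj_inl G ha3)
      h12 hr1' hr2' hc1 hc2
  by_cases hbig : ∃ u, 2 ≤ c u
  · obtain ⟨u, hcu⟩ := hbig
    have hu3 : c u ≤ 3 := by
      by_contra hc
      exact h4 ⟨u, by omega⟩
    have hur : u ≠ r := by intro he; rw [he] at hcu; omega
    have hsmall : ∀ x, x ≠ u → c x ≤ 1 := by
      intro x hx
      by_contra hc
      exact h2 ⟨x, u, hx, by omega, hcu⟩
    by_cases hw : ∃ a : Fin n, a ≠ idxv u ∧ a ≠ idxv r ∧ 1 ≤ c (Sum.inl a)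
    · obtain ⟨a, ha1, ha2, ha3⟩ := hw
      exact solvB (adj_inl G ha1).symm (adj_inl G ha2) hur hcu ha3
    · exfalso
      push_neg at hw
      set Z : Finset (Fin n) := (Finset.univ.erase (idxv u)).erase (idxv r) with hZ
      set W : Finset (Fin n ⊕ Fin n × β) := insert r (Z.image Sum.inl) with hW
      have hrW : r ∉ Z.image Sum.inl := by
        intro hmem
        obtain ⟨a, haZ, hae⟩ := Finset.mem_image.mp hmem
        have ha2 : a ≠ idxv r := (Finset.mem_erase.mp haZ).1
        exact ha2 (by rw [← hae]; rfl)
      have hcardW : n - 1 ≤ W.card := by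
        rw [hW, Finset.card_insert_of_notMem hrW,
          Finset.card_image_of_injective _ Sum.inl_injective]
        have e1 : n - 1 ≤ (Finset.univ.erase (idxv u) : Finset (Fin n)).card := by
          have h := Finset.pred_card_le_card_erase
            (s := (Finset.univ : Finset (Fin n))) (a := idxv u)
          simp only [Finset.card_univ, Fintype.card_fin] at h; exact h
        have e2 := Finset.pred_card_le_card_erase
          (s := (Finset.univ.erase (idxv u) : Finset (Fin n))) (a := idxv r)
        rw [hZ]
        omega
      have hWzero : ∀ x ∈ W, c x = 0 := by
        intro x hx
        rcases Finset.mem_insert.mp hx with rfl | hx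
        · exact hr0
        · obtain ⟨a, haZ, rfl⟩ := Finset.mem_image.mp hx
          have h1 := (Finset.mem_erase.mp haZ).1
          have h2' := (Finset.mem_erase.mp (Finset.mem_erase.mp haZ).2).1
          have := hw a h2' h1
          omega
      have hWsub : W ⊆ Finset.univ.erase u := by
        intro x hx
        rcases Finset.mem_insert.mp hx with rfl | hx
        · exact Finset.mem_erase.mpr ⟨Ne.symm hur, Finset.mem_univ _⟩
        · obtain ⟨a, haZ, rfl⟩ := Finset.mem_image.mp hx
          have h2' := (Finset.mem_erase.mp (Finset.mem_erase.mp haZ).2).1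
          exact Finset.mem_erase.mpr ⟨ne_of_idx h2', Finset.mem_univ _⟩
      have hErase : (Finset.univ.erase u : Finset (Fin n ⊕ Fin n × β)).card = N - 1 := by
        rw [Finset.card_erase_of_mem (Finset.mem_univ _), Finset.card_univ, hcard]
      have hsplit : ∑ x ∈ Finset.univ.erase u, c x + c u = N := by
        rw [Finset.sum_erase_add _ _ (Finset.mem_univ u)]
        exact hsum
      have hz : ∑ x ∈ Finset.univ.erase u, c x = ∑ x ∈ Finset.univ.erase u \ W, c x := by
        refine (Finset.sum_subset Finset.sdiff_subset ?_).symm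
        intro x hx hnx
        have hxW : x ∈ W := by
          by_contra hxw
          exact hnx (Finset.mem_sdiff.mpr ⟨hx, hxw⟩)
        exact hWzero x hxW
      have hble : ∑ x ∈ Finset.univ.erase u \ W, c x ≤ (Finset.univ.erase u \ W).card := by
        refine le_trans (Finset.sum_le_card_nsmul _ _ 1 ?_) (by simp)
        intro x hx
        exact hsmall x (Finset.mem_erase.mp (Finset.mem_sdiff.mp hx).1).1
      have hcardsd : (Finset.univ.erase u \ W).card = N - 1 - W.card := by
        rw [Finset.card_sdiff_of_subset hWsub, hErase]
      have hWle : W.card ≤ N - 1 := by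
        have := Finset.card_le_card hWsub
        omega
      omega
  · exfalso
    push_neg at hbig
    have hsp : ∑ x ∈ Finset.univ.erase r, c x + c r = N := by
      rw [Finset.sum_erase_add _ _ (Finset.mem_univ r)]
      exact hsum
    have hb : ∑ x ∈ Finset.univ.erase r, c x ≤ (Finset.univ.erase r).card := by
      refine le_trans (Finset.sum_le_card_nsmul _ _ 1 (fun x _ => by have := hbig x; omega))
        (by simp)
    have hce : (Finset.univ.erase r).card = N - 1 := by
      rw [Finset.card_erase_of_mem (Finset.mem_univ _), Finset.card_univ, hcard]
    omega

lemma not_mem_lower [Fintype β] (n : ℕ) (hn : 4 ≤ n) (G : SimpleGraph β)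
    {m : ℕ} (hm : m < n + n * Fintype.card β) :
    m ∉ pebblingSet (ncoronaProd (⊤ : SimpleGraph (Fin n)) G) 1 := by
  classical
  set N := n + n * Fintype.card β with hNdef
  have hnN : n ≤ N := Nat.le_add_right _ _
  have hcard : Fintype.card (Fin n ⊕ Fin n × β) = N := by
    simp [hNdef]
  have hN0 : 0 < N := by omega
  set r : Fin n ⊕ Fin n × β := Sum.inl ⟨0, by omega⟩ with hrdef
  let e0 : (Fin n ⊕ Fin n × β) ≃ Fin N := Fintype.equivFinOfCardEq hcard
  let L : Fin N := ⟨N - 1, by omega⟩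
  let e := e0.trans (Equiv.swap (e0 r) L)
  have her : e r = L := by simp [e, Equiv.swap_apply_left]
  set c : (Fin n ⊕ Fin n × β) → ℕ := fun v => if ((e v : Fin N) : ℕ) < m then 1 else 0 with hc
  have hcr : c r = 0 := by
    have hL : ¬ ((L : Fin N) : ℕ) < m := by
      simp only [L]
      omega
    simp only [hc, her, hL, if_false]
  have hcle : ∀ v, c v ≤ 1 := by
    intro v
    simp only [hc]
    split <;> omega
  have hsum : ∑ v, c v = m := by
    simp only [hc]
    rw [Fintype.sum_equiv e _ (fun i : Fin N => if (i : ℕ) < m then 1 else 0) (fun v => rfl)]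
    rw [Fin.sum_univ_eq_sum_range (fun k => if k < m then 1 else 0) N]
    have hfil : Finset.filter (fun k => k < m) (Finset.range N) = Finset.range m := by
      ext k
      simp only [Finset.mem_filter, Finset.mem_range]
      omega
    rw [Finset.sum_ite, Finset.sum_const, Finset.sum_const, hfil, Finset.card_range]
    simp
  intro hmem
  obtain ⟨c', hreach, hle⟩ := hmem c hsum r
  rw [frozen hcle hreach] at hle
  omega

end NCorona

/-- For `n ≥ 4`, the neighbourhood corona `K n ⋆ G` is Class 0: its pebbling number
equals its order `n + n |V(G)|`. -/
theorem pebblingNumber_Kn_ncorona (n : ℕ) (hn : 4 ≤ n)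
    {β : Type*} [Fintype β] (G : SimpleGraph β) :
    pebblingNumber (ncoronaProd (⊤ : SimpleGraph (Fin n)) G) 1 =
      ((n + n * Fintype.card β : ℕ) : ℕ∞) := by
  classical
  unfold pebblingNumber
  apply le_antisymm
  · exact sInf_le (Set.mem_image_of_mem _ (mem_upper n hn G))
  · refine le_sInf ?_
    rintro b ⟨m, hm, rfl⟩
    by_contra hlt
    push_neg at hlt
    have hmlt : m < n + n * Fintype.card β := by exact_mod_cast hlt
    exact not_mem_lower n hn G hmlt hm
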